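/- Let A, B be n×n real symmetric matrices and let f : ℝⁿ → ℝ be a symmetric strictly Schur-convex function with F(X) = f(λ(X)). If X̄ is a global minimizer of F(X − A) over {X symmetric : λ(X) = λ(B)}, then λ(X̄ − A) = (λ(X̄) − λ(A))↓, i.e., A and X̄ strongly commute. -/

import Mathlib

open Finset

/-- Decreasing rearrangement of a vector in ℝⁿ. -/
noncomputable def dsort {n : ℕ} (u : Fin n → ℝ) : Fin n → ℝ :=
  u ∘ Tuple.sort (fun i => -u i)

/-- `Maj u v` : `u` is majorized by `v`. -/
def Maj {n : ℕ} (u v : Fin n → ℝ) : Prop :=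
  (∀ k : ℕ, ∑ i ∈ univ.filter (fun i : Fin n => (i : ℕ) < k), dsort u i ≤
      ∑ i ∈ univ.filter (fun i : Fin n => (i : ℕ) < k), dsort v i) ∧
  ∑ i, u i = ∑ i, v i

open Matrix

/-- Decreasingly ordered eigenvalue vector of a real symmetric matrix. -/
noncomputable def specVec {n : ℕ} {A : Matrix (Fin n) (Fin n) ℝ} (hA : A.IsHermitian) :
    Fin n → ℝ :=
  dsort hA.eigenvalues

/-- `A` and `B` strongly commute: a common orthonormal eigenbasis realizing both
decreasingly ordered spectra simultaneously. -/
def StrongCommute {n : ℕ} {A B : Matrix (Fin n) (Fin n) ℝ}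
    (hA : A.IsHermitian) (hB : B.IsHermitian) : Prop :=
  ∃ U : Matrix (Fin n) (Fin n) ℝ, U * Uᵀ = 1 ∧
    Uᵀ * A * U = Matrix.diagonal (specVec hA) ∧
    Uᵀ * B * U = Matrix.diagonal (specVec hB)

section


lemma dsort_unique {n : ℕ} {u : Fin n → ℝ} (σ : Equiv.Perm (Fin n))
    (h : Monotone ((fun i => -u i) ∘ σ)) : u ∘ σ = dsort u := by
  have := (Tuple.comp_sort_eq_comp_iff_monotone (f := fun i => -u i) (σ := σ)).2 h
  funext i
  have := congrFun this i
  simpa [dsort, Function.comp, neg_inj] using this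

lemma antitone_dsort {n : ℕ} (u : Fin n → ℝ) : Antitone (dsort u) := by
  intro i j hij
  have := Tuple.monotone_sort (fun i => -u i) hij
  simpa [dsort, Function.comp, neg_le_neg_iff] using this

lemma dsort_comp_perm {n : ℕ} (u : Fin n → ℝ) (π : Equiv.Perm (Fin n)) :
    dsort (u ∘ π) = dsort u := by
  have h := Tuple.comp_perm_comp_sort_eq_comp_sort (f := fun i => -u i) (σ := π)
  funext i
  have := congrFun h i
  simpa [dsort, Function.comp_def, neg_inj] using this

lemma dsort_dsort {n : ℕ} (u : Fin n → ℝ) : dsort (dsort u) = dsort u := by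
  have : dsort u = u ∘ Tuple.sort (fun i => -u i) := rfl
  conv_lhs => rw [this]
  rw [dsort_comp_perm]

lemma sum_dsort {n : ℕ} (u : Fin n → ℝ) : ∑ i, dsort u i = ∑ i, u i :=
  Equiv.sum_comp (Tuple.sort (fun i => -u i)) u

lemma dsort_add_const {n : ℕ} (u : Fin n → ℝ) (c : ℝ) :
    dsort (fun i => u i + c) = fun i => dsort u i + c := by
  set σ := Tuple.sort (fun i => -u i)
  have h : Monotone ((fun i => -(u i + c)) ∘ σ) := by
    intro i j hij
    have := Tuple.monotone_sort (fun i => -u i) hij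
    simp only [Function.comp] at this ⊢
    linarith [this]
  have := dsort_unique (u := fun i => u i + c) σ h
  rw [← this]
  funext i
  rfl

lemma multiset_map_dsort {n : ℕ} (u : Fin n → ℝ) :
    Multiset.map (dsort u) Finset.univ.val = Multiset.map u Finset.univ.val := by
  set σ := Tuple.sort (fun i => -u i)
  have h1 : Multiset.map (dsort u) Finset.univ.val
      = Multiset.map u (Multiset.map (⇑σ) Finset.univ.val) := by
    rw [Multiset.map_map]; rfl
  rw [h1]
  congr 1
  have : Finset.univ.map σ.toEmbedding = Finset.univ := Finset.map_univ_equiv σ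
  calc Multiset.map (⇑σ) Finset.univ.val = (Finset.univ.map σ.toEmbedding).val := rfl
    _ = Finset.univ.val := by rw [this]

lemma sorted_ofFn_of_antitone {n : ℕ} {u : Fin n → ℝ} (h : Antitone u) :
    (List.ofFn u).Pairwise (· ≥ ·) := by
  rw [List.ofFn_eq_map]
  rw [List.pairwise_map]
  exact (List.pairwise_lt_finRange n).imp (fun hab => h (le_of_lt hab))

lemma ofFn_coe_multiset {n : ℕ} (u : Fin n → ℝ) :
    (↑(List.ofFn u) : Multiset ℝ) = Multiset.map u Finset.univ.val := by
  rw [List.ofFn_eq_map]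
  rfl

lemma dsort_eq_of_multiset {n : ℕ} {u v : Fin n → ℝ}
    (h : Multiset.map u Finset.univ.val = Multiset.map v Finset.univ.val) :
    dsort u = dsort v := by
  apply List.ofFn_injective (n := n)
  refine (fun hp h1 h2 => List.Perm.eq_of_pairwise' (r := (· ≥ ·)) h1 h2 hp) ?_ ?_ ?_
  · rw [← Multiset.coe_eq_coe, ofFn_coe_multiset, ofFn_coe_multiset,
      multiset_map_dsort, multiset_map_dsort, h]
  · exact sorted_ofFn_of_antitone (antitone_dsort u)
  · exact sorted_ofFn_of_antitone (antitone_dsort v)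


open Polynomial

variable {n : ℕ}

lemma charpoly_diag (d : Fin n → ℝ) :
    (Matrix.diagonal d).charpoly = ∏ i, (X - C (d i)) := by
  rw [Matrix.charpoly, Matrix.charmatrix, RingHom.mapMatrix_apply,
    Matrix.diagonal_map (map_zero _), Matrix.scalar_apply, Matrix.diagonal_sub,
    Matrix.det_diagonal]

lemma charpoly_conj {W M : Matrix (Fin n) (Fin n) ℝ} (hW : W * Wᵀ = 1) :
    (Wᵀ * M * W).charpoly = M.charpoly := by
  have hW' : Wᵀ * W = 1 := mul_eq_one_comm.mp hW
  rw [Matrix.charpoly, Matrix.charpoly]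
  have e1 : Wᵀ.map (C : ℝ →+* ℝ[X]) * W.map (C : ℝ →+* ℝ[X]) = 1 := by
    rw [← Matrix.map_mul, hW', Matrix.map_one _ (map_zero _) (map_one _)]
  have key : Matrix.charmatrix (Wᵀ * M * W)
      = (Wᵀ.map (C : ℝ →+* ℝ[X])) * Matrix.charmatrix M * (W.map (C : ℝ →+* ℝ[X])) := by
    rw [Matrix.charmatrix, Matrix.charmatrix, RingHom.mapMatrix_apply, RingHom.mapMatrix_apply,
      Matrix.mul_sub, Matrix.sub_mul]
    congr 1
    · rw [Matrix.scalar_apply, ← Matrix.smul_one_eq_diagonal, Matrix.mul_smul, mul_one,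
        Matrix.smul_mul, e1]
    · rw [← Matrix.map_mul, ← Matrix.map_mul]
  rw [key, Matrix.det_mul, Matrix.det_mul]
  have e2 : (Wᵀ.map (C : ℝ →+* ℝ[X])).det * (W.map (C : ℝ →+* ℝ[X])).det = 1 := by
    rw [← Matrix.det_mul, e1, Matrix.det_one]
  calc (Wᵀ.map (C : ℝ →+* ℝ[X])).det * (Matrix.charmatrix M).det * (W.map (C : ℝ →+* ℝ[X])).det
      = (Matrix.charmatrix M).det *
        ((Wᵀ.map (C : ℝ →+* ℝ[X])).det * (W.map (C : ℝ →+* ℝ[X])).det) := by ring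
    _ = (Matrix.charmatrix M).det := by rw [e2, mul_one]

lemma orth_eigen (hM : M.IsHermitian) :
    ∃ V : Matrix (Fin n) (Fin n) ℝ, V * Vᵀ = 1 ∧
      Vᵀ * M * V = Matrix.diagonal hM.eigenvalues := by
  refine ⟨(hM.eigenvectorUnitary : Matrix (Fin n) (Fin n) ℝ), ?_, ?_⟩
  · have := (Matrix.mem_unitaryGroup_iff).mp hM.eigenvectorUnitary.2
    rwa [Matrix.star_eq_conjTranspose, Matrix.conjTranspose_eq_transpose_of_trivial] at this
  · have : star (hM.eigenvectorUnitary : Matrix (Fin n) (Fin n) ℝ) * M * (hM.eigenvectorUnitary : Matrix (Fin n) (Fin n) ℝ)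
        = Matrix.diagonal (RCLike.ofReal ∘ hM.eigenvalues) := by
      have h := hM.conjStarAlgAut_star_eigenvectorUnitary
      rw [Unitary.conjStarAlgAut_apply, Unitary.coe_star, star_star] at h
      exact h
    rw [Matrix.star_eq_conjTranspose, Matrix.conjTranspose_eq_transpose_of_trivial] at this
    rw [this, RCLike.ofReal_real_eq_id]
    rfl

lemma specVec_eq_dsort (hM : M.IsHermitian) {W : Matrix (Fin n) (Fin n) ℝ} {d : Fin n → ℝ}
    (hW : W * Wᵀ = 1) (h : Wᵀ * M * W = Matrix.diagonal d) :
    specVec hM = dsort d := by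
  obtain ⟨V, hV, hVd⟩ := orth_eigen hM
  have h1 : (Matrix.diagonal hM.eigenvalues).charpoly = (Matrix.diagonal d).charpoly := by
    rw [← hVd, ← h, charpoly_conj hV, charpoly_conj hW]
  rw [charpoly_diag, charpoly_diag] at h1
  have h2 : Multiset.map hM.eigenvalues Finset.univ.val = Multiset.map d Finset.univ.val := by
    have r1 := congrArg Polynomial.roots h1
    have mm : ∀ (e : Fin n → ℝ), Multiset.map (fun i => X - C (e i)) Finset.univ.val
        = Multiset.map (fun a => X - C a) (Multiset.map e Finset.univ.val) :=
      fun e => by rw [Multiset.map_map]; rfl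
    rwa [Finset.prod_eq_multiset_prod, Finset.prod_eq_multiset_prod, mm, mm,
      Polynomial.roots_multiset_prod_X_sub_C, Polynomial.roots_multiset_prod_X_sub_C] at r1
  exact dsort_eq_of_multiset h2

lemma sortedSpectral (hM : M.IsHermitian) :
    ∃ W : Matrix (Fin n) (Fin n) ℝ, W * Wᵀ = 1 ∧
      Wᵀ * M * W = Matrix.diagonal (specVec hM) := by
  obtain ⟨V, hV, hVd⟩ := orth_eigen hM
  set σ := Tuple.sort (fun i => -hM.eigenvalues i) with hσ
  refine ⟨V.submatrix id ⇑σ, ?_, ?_⟩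
  · rw [Matrix.transpose_submatrix]
    have : V.submatrix id ⇑σ * Vᵀ.submatrix ⇑σ id
        = (V * Vᵀ).submatrix id id := Matrix.submatrix_mul_equiv V Vᵀ id σ id
    rw [this, hV]
    rfl
  · rw [Matrix.transpose_submatrix]
    have e1 : Vᵀ.submatrix ⇑σ id * M = (Vᵀ * M).submatrix ⇑σ id := by
      have := Matrix.submatrix_mul_equiv Vᵀ M ⇑σ (Equiv.refl (Fin n)) id
      simpa using this
    have e2 : (Vᵀ * M).submatrix ⇑σ id * V.submatrix id ⇑σ
        = (Vᵀ * M * V).submatrix ⇑σ ⇑σ := by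
      have := Matrix.submatrix_mul_equiv (Vᵀ * M) V ⇑σ (Equiv.refl (Fin n)) ⇑σ
      simpa using this
    rw [e1, e2, hVd, Matrix.submatrix_diagonal _ _ σ.injective]
    rfl

lemma dot_mulVec_left (U : Matrix (Fin n) (Fin n) ℝ) (c w : Fin n → ℝ) :
    c ⬝ᵥ (Uᵀ *ᵥ w) = (U *ᵥ c) ⬝ᵥ w := by
  rw [Matrix.dotProduct_mulVec, Matrix.vecMul_transpose]

lemma quad_identity (U M : Matrix (Fin n) (Fin n) ℝ) (c : Fin n → ℝ) :
    (U *ᵥ c) ⬝ᵥ (M *ᵥ (U *ᵥ c)) = c ⬝ᵥ ((Uᵀ * M * U) *ᵥ c) := by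
  rw [mul_assoc, ← Matrix.mulVec_mulVec c Uᵀ (M * U), dot_mulVec_left,
    ← Matrix.mulVec_mulVec c M U]

lemma diag_quad (d c : Fin n → ℝ) :
    c ⬝ᵥ (Matrix.diagonal d *ᵥ c) = ∑ j, d j * c j ^ 2 := by
  simp only [dotProduct, Matrix.mulVec_diagonal]
  exact Finset.sum_congr rfl (fun j _ => by ring)

lemma dot_self_as_sum (U : Matrix (Fin n) (Fin n) ℝ) (hU : U * Uᵀ = 1) (c : Fin n → ℝ) :
    (U *ᵥ c) ⬝ᵥ (U *ᵥ c) = ∑ j, c j ^ 2 := by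
  have h1 : (U *ᵥ c) ⬝ᵥ ((1 : Matrix (Fin n) (Fin n) ℝ) *ᵥ (U *ᵥ c))
      = c ⬝ᵥ ((Uᵀ * 1 * U) *ᵥ c) := quad_identity U 1 c
  rw [Matrix.one_mulVec] at h1
  rw [h1, mul_one, mul_eq_one_comm.mp hU]
  rw [show (1 : Matrix (Fin n) (Fin n) ℝ) = Matrix.diagonal (fun _ => (1:ℝ)) by
    rw [Matrix.diagonal_one], diag_quad]
  simp

/-- The coordinate subspace supported on `S`. -/
def coordSpace (S : Finset (Fin n)) : Submodule ℝ (Fin n → ℝ) where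
  carrier := {c | ∀ j ∉ S, c j = 0}
  add_mem' := by intro a b ha hb j hj; simp [ha j hj, hb j hj]
  zero_mem' := by intro j hj; rfl
  smul_mem' := by intro r a ha j hj; simp [ha j hj]

lemma coordSpace_equiv (S : Finset (Fin n)) : Nonempty ((coordSpace S) ≃ₗ[ℝ] (↥S → ℝ)) := by
  refine ⟨{ toFun := fun c j => (c : Fin n → ℝ) j,
            invFun := fun g => ⟨fun j => if h : j ∈ S then g ⟨j, h⟩ else 0, ?_⟩,
            map_add' := fun a b => rfl, map_smul' := fun r a => rfl,
            left_inv := ?_, right_inv := ?_ }⟩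
  · intro j hj; simp [hj]
  · intro c
    ext j
    by_cases h : j ∈ S
    · simp [h]
    · simp [h, (c.2 j h).symm]
  · intro g
    funext j
    simp [j.2]

lemma finrank_coordSpace (S : Finset (Fin n)) :
    Module.finrank ℝ (coordSpace S) = S.card := by
  obtain ⟨e⟩ := coordSpace_equiv S
  rw [e.finrank_eq, Module.finrank_pi, Fintype.card_coe]

/-- Span of the columns of `U` indexed by `S`. -/
def colSpace (U : Matrix (Fin n) (Fin n) ℝ) (S : Finset (Fin n)) : Submodule ℝ (Fin n → ℝ) :=
  (coordSpace S).map U.mulVecLin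

lemma mulVecLin_injective {U : Matrix (Fin n) (Fin n) ℝ} (hU : U * Uᵀ = 1) :
    Function.Injective U.mulVecLin := by
  intro a b hab
  simp only [Matrix.mulVecLin_apply] at hab
  have := congrArg (fun y => Uᵀ *ᵥ y) hab
  simpa [Matrix.mulVec_mulVec, mul_eq_one_comm.mp hU, Matrix.one_mulVec] using this

lemma finrank_colSpace {U : Matrix (Fin n) (Fin n) ℝ} (hU : U * Uᵀ = 1) (S : Finset (Fin n)) :
    Module.finrank ℝ (colSpace U S) = S.card := by
  rw [colSpace, ← (Submodule.equivMapOfInjective _ (mulVecLin_injective hU)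
    (coordSpace S)).finrank_eq, finrank_coordSpace]

lemma mem_colSpace_iff {U : Matrix (Fin n) (Fin n) ℝ} {S : Finset (Fin n)} {x : Fin n → ℝ} :
    x ∈ colSpace U S ↔ ∃ c : Fin n → ℝ, (∀ j ∉ S, c j = 0) ∧ x = U *ᵥ c := by
  constructor
  · rintro ⟨c, hc, rfl⟩
    exact ⟨c, hc, rfl⟩
  · rintro ⟨c, hc, rfl⟩
    exact ⟨c, hc, rfl⟩

section quadbounds

variable {U M : Matrix (Fin n) (Fin n) ℝ} {d : Fin n → ℝ} {S : Finset (Fin n)} {x : Fin n → ℝ}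

lemma quad_ge (hU : U * Uᵀ = 1) (hdiag : Uᵀ * M * U = Matrix.diagonal d)
    (hx : x ∈ colSpace U S) {t : ℝ} (hd : ∀ j ∈ S, t ≤ d j) :
    t * (x ⬝ᵥ x) ≤ x ⬝ᵥ (M *ᵥ x) := by
  obtain ⟨c, hc, rfl⟩ := mem_colSpace_iff.mp hx
  rw [quad_identity, hdiag, diag_quad, dot_self_as_sum U hU, Finset.mul_sum]
  refine Finset.sum_le_sum (fun j _ => ?_)
  by_cases hj : j ∈ S
  · exact mul_le_mul_of_nonneg_right (hd j hj) (sq_nonneg _)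
  · simp [hc j hj]

lemma quad_le (hU : U * Uᵀ = 1) (hdiag : Uᵀ * M * U = Matrix.diagonal d)
    (hx : x ∈ colSpace U S) {t : ℝ} (hd : ∀ j ∈ S, d j ≤ t) :
    x ⬝ᵥ (M *ᵥ x) ≤ t * (x ⬝ᵥ x) := by
  obtain ⟨c, hc, rfl⟩ := mem_colSpace_iff.mp hx
  rw [quad_identity, hdiag, diag_quad, dot_self_as_sum U hU, Finset.mul_sum]
  refine Finset.sum_le_sum (fun j _ => ?_)
  by_cases hj : j ∈ S
  · exact mul_le_mul_of_nonneg_right (hd j hj) (sq_nonneg _)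
  · simp [hc j hj]

end quadbounds

lemma dot_self_pos {x : Fin n → ℝ} (hx : x ≠ 0) : 0 < x ⬝ᵥ x := by
  rcases lt_or_eq_of_le (Finset.sum_nonneg (fun i (_ : i ∈ Finset.univ) =>
    mul_self_nonneg (x i))) with h | h
  · exact h
  · exact absurd (dotProduct_self_eq_zero.mp h.symm) hx

/-- Weyl monotonicity: adding a PSD matrix increases all (sorted) eigenvalues. -/
lemma weyl_mono {A C : Matrix (Fin n) (Fin n) ℝ} (hA : A.IsHermitian) (hC : C.IsHermitian)
    (hC0 : ∀ x : Fin n → ℝ, 0 ≤ x ⬝ᵥ (C *ᵥ x)) (i : Fin n) :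
    specVec hA i ≤ specVec (hA.add hC) i := by
  obtain ⟨U, hU, hUd⟩ := sortedSpectral hA
  obtain ⟨V, hV, hVd⟩ := sortedSpectral (hA.add hC)
  set a := specVec hA
  set b := specVec (hA.add hC)
  -- the two subspaces
  set V₁ := colSpace U (Finset.Iic i)
  set V₂ := colSpace V (Finset.Ici i)
  have h₁ : Module.finrank ℝ V₁ = (i : ℕ) + 1 := by
    rw [finrank_colSpace hU, Fin.card_Iic]
  have h₂ : Module.finrank ℝ V₂ = n - (i : ℕ) := by
    rw [finrank_colSpace hV, Fin.card_Ici]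
  have hinf : V₁ ⊓ V₂ ≠ ⊥ := by
    intro hbot
    have hsum := Submodule.finrank_sup_add_finrank_inf_eq V₁ V₂
    rw [hbot, finrank_bot, h₁, h₂] at hsum
    have hle : Module.finrank ℝ ↥(V₁ ⊔ V₂) ≤ n := by
      have := Submodule.finrank_le (V₁ ⊔ V₂)
      rwa [Module.finrank_pi ℝ, Fintype.card_fin] at this
    omega
  obtain ⟨x, hxmem, hxne⟩ := Submodule.exists_mem_ne_zero_of_ne_bot hinf
  have hx1 : x ∈ V₁ := hxmem.1
  have hx2 : x ∈ V₂ := hxmem.2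
  have hq1 : a i * (x ⬝ᵥ x) ≤ x ⬝ᵥ (A *ᵥ x) :=
    quad_ge hU hUd hx1 (fun j hj => antitone_dsort _ (Finset.mem_Iic.mp hj))
  have hq2 : x ⬝ᵥ ((A + C) *ᵥ x) ≤ b i * (x ⬝ᵥ x) :=
    quad_le hV hVd hx2 (fun j hj => antitone_dsort _ (Finset.mem_Ici.mp hj))
  have hq3 : x ⬝ᵥ (A *ᵥ x) ≤ x ⬝ᵥ ((A + C) *ᵥ x) := by
    rw [Matrix.add_mulVec, dotProduct_add]
    linarith [hC0 x]
  have hpos := dot_self_pos hxne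
  nlinarith

lemma dsort_specVec {M : Matrix (Fin n) (Fin n) ℝ} (hM : M.IsHermitian) :
    dsort (specVec hM) = specVec hM := dsort_dsort _

lemma specVec_congr {M N : Matrix (Fin n) (Fin n) ℝ} (h : M = N)
    (hM : M.IsHermitian) (hN : N.IsHermitian) : specVec hM = specVec hN := by
  subst h; rfl

lemma conj_diag_back {V : Matrix (Fin n) (Fin n) ℝ} (hV : V * Vᵀ = 1)
    (D : Matrix (Fin n) (Fin n) ℝ) : Vᵀ * (V * D * Vᵀ) * V = D := by
  have hV' : Vᵀ * V = 1 := mul_eq_one_comm.mp hV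
  calc Vᵀ * (V * D * Vᵀ) * V = (Vᵀ * V) * D * (Vᵀ * V) := by
        simp only [← Matrix.mul_assoc]
    _ = D := by rw [hV', one_mul, mul_one]

lemma conj_diag_forward {V : Matrix (Fin n) (Fin n) ℝ} (hV : V * Vᵀ = 1)
    (D : Matrix (Fin n) (Fin n) ℝ) : V * (Vᵀ * D * V) * Vᵀ = D := by
  have hV' : Vᵀ * V = 1 := mul_eq_one_comm.mp hV
  calc V * (Vᵀ * D * V) * Vᵀ = (V * Vᵀ) * D * (V * Vᵀ) := by
        simp only [← Matrix.mul_assoc]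
    _ = D := by rw [hV, one_mul, mul_one]

lemma herm_conj_diag (V : Matrix (Fin n) (Fin n) ℝ) (d : Fin n → ℝ) :
    (V * Matrix.diagonal d * Vᵀ).IsHermitian := by
  rw [Matrix.IsHermitian, Matrix.conjTranspose_eq_transpose_of_trivial,
    Matrix.transpose_mul, Matrix.transpose_mul, Matrix.transpose_transpose,
    Matrix.diagonal_transpose, Matrix.mul_assoc]

lemma herm_smul_one (μ : ℝ) : ((μ • (1 : Matrix (Fin n) (Fin n) ℝ))).IsHermitian := by
  rw [Matrix.IsHermitian, Matrix.conjTranspose_eq_transpose_of_trivial,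
    Matrix.transpose_smul, Matrix.transpose_one]

lemma quad_conj_diag {V : Matrix (Fin n) (Fin n) ℝ} (hV : V * Vᵀ = 1) (d : Fin n → ℝ)
    (x : Fin n → ℝ) :
    x ⬝ᵥ ((V * Matrix.diagonal d * Vᵀ) *ᵥ x) = ∑ j, d j * (Vᵀ *ᵥ x) j ^ 2 := by
  have hx : x = V *ᵥ (Vᵀ *ᵥ x) := by
    rw [Matrix.mulVec_mulVec, hV, Matrix.one_mulVec]
  conv_lhs => rw [hx]
  rw [quad_identity, conj_diag_back hV, diag_quad]

lemma trace_conj_diag {V : Matrix (Fin n) (Fin n) ℝ} (hV : V * Vᵀ = 1) (d : Fin n → ℝ) :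
    (V * Matrix.diagonal d * Vᵀ).trace = ∑ j, d j := by
  have hV' : Vᵀ * V = 1 := mul_eq_one_comm.mp hV
  rw [Matrix.trace_mul_cycle, hV', one_mul, Matrix.trace_diagonal]

lemma trace_specVec {M : Matrix (Fin n) (Fin n) ℝ} (hM : M.IsHermitian) :
    M.trace = ∑ i, specVec hM i := by
  obtain ⟨W, hW, hWd⟩ := sortedSpectral hM
  have : M = W * Matrix.diagonal (specVec hM) * Wᵀ := by
    rw [← hWd, conj_diag_forward hW]
  conv_lhs => rw [this]
  rw [trace_conj_diag hW]

lemma specVec_shift {M : Matrix (Fin n) (Fin n) ℝ} (hM : M.IsHermitian) (μ : ℝ)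
    (hM' : (M + μ • (1 : Matrix (Fin n) (Fin n) ℝ)).IsHermitian) :
    specVec hM' = fun i => specVec hM i + μ := by
  obtain ⟨W, hW, hWd⟩ := sortedSpectral hM
  have hW' : Wᵀ * W = 1 := mul_eq_one_comm.mp hW
  have key : Wᵀ * (M + μ • (1 : Matrix (Fin n) (Fin n) ℝ)) * W
      = Matrix.diagonal (fun i => specVec hM i + μ) := by
    rw [Matrix.mul_add, Matrix.add_mul, hWd]
    have : Wᵀ * (μ • (1 : Matrix (Fin n) (Fin n) ℝ)) * W = μ • (1 : Matrix (Fin n) (Fin n) ℝ) := by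
      rw [Matrix.mul_smul, mul_one, Matrix.smul_mul, hW']
    rw [this, ← Matrix.diagonal_one, ← Matrix.diagonal_smul, Matrix.diagonal_add]
    congr 1
    funext i
    simp
  rw [specVec_eq_dsort hM' hW key, dsort_add_const, dsort_specVec]

lemma card_filter_lt {k : ℕ} (hkn : k ≤ n) :
    (Finset.univ.filter (fun i : Fin n => (i : ℕ) < k)).card = k := by
  have : Finset.univ.filter (fun i : Fin n => (i : ℕ) < k)
      = (Finset.univ : Finset (Fin k)).map (Fin.castLEEmb hkn) := by
    ext i
    simp only [Finset.mem_filter, Finset.mem_univ, true_and, Finset.mem_map]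
    constructor
    · intro h
      exact ⟨⟨(i : ℕ), h⟩, rfl⟩
    · rintro ⟨j, -, rfl⟩
      exact j.isLt
  rw [this, Finset.card_map, Finset.card_univ, Fintype.card_fin]

/-- Core Lidskii subset inequality. -/
lemma lidskii_subset {A M : Matrix (Fin n) (Fin n) ℝ} (hA : A.IsHermitian)
    (hM : M.IsHermitian) {k : ℕ} (hk1 : 1 ≤ k) (hkn : k ≤ n)
    (S : Finset (Fin n)) (hScard : S.card = k) :
    ∑ i ∈ S, (specVec hM i - specVec hA i) ≤
      ∑ i ∈ univ.filter (fun i : Fin n => (i : ℕ) < k), specVec (hM.sub hA) i := by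
  have hC : (M - A).IsHermitian := hM.sub hA
  set c := specVec hC with hc_def
  obtain ⟨V, hV, hVd⟩ := sortedSpectral hC
  have hCeq : M - A = V * Matrix.diagonal c * Vᵀ := by
    rw [← hVd, conj_diag_forward hV]
  set kk : Fin n := ⟨k - 1, by omega⟩ with hkk_def
  set μ : ℝ := c kk with hμ_def
  set p : Fin n → ℝ := fun j => max (c j - μ) 0 with hp_def
  set Cp : Matrix (Fin n) (Fin n) ℝ := V * Matrix.diagonal p * Vᵀ with hCp_def
  have hCp : Cp.IsHermitian := herm_conj_diag V p
  have hCp0 : ∀ x : Fin n → ℝ, 0 ≤ x ⬝ᵥ (Cp *ᵥ x) := by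
    intro x
    rw [hCp_def, quad_conj_diag hV]
    exact Finset.sum_nonneg fun j _ => mul_nonneg (le_max_right _ _) (sq_nonneg _)
  -- the PSD "remainder"  R = Cp - (M - A) + μ • 1
  set R : Matrix (Fin n) (Fin n) ℝ := Cp - (M - A) + μ • (1 : Matrix (Fin n) (Fin n) ℝ)
    with hR_def
  have hR : R.IsHermitian := (hCp.sub hC).add (herm_smul_one μ)
  have hR0 : ∀ x : Fin n → ℝ, 0 ≤ x ⬝ᵥ (R *ᵥ x) := by
    intro x
    have h1 : R *ᵥ x = Cp *ᵥ x - (M - A) *ᵥ x + μ • x := by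
      rw [hR_def, Matrix.add_mulVec, Matrix.sub_mulVec, Matrix.smul_mulVec,
        Matrix.one_mulVec]
    rw [h1, dotProduct_add, dotProduct_sub, dotProduct_smul, hCp_def, quad_conj_diag hV,
      hCeq, quad_conj_diag hV]
    have h2 : x ⬝ᵥ x = ∑ j, (Vᵀ *ᵥ x) j ^ 2 := by
      have hx : x = V *ᵥ (Vᵀ *ᵥ x) := by
        rw [Matrix.mulVec_mulVec, hV, Matrix.one_mulVec]
      have h3 : x ⬝ᵥ ((V * Matrix.diagonal (fun _ => (1:ℝ)) * Vᵀ) *ᵥ x)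
          = ∑ j, (1:ℝ) * (Vᵀ *ᵥ x) j ^ 2 := quad_conj_diag hV _ x
      have h4 : V * Matrix.diagonal (fun _ => (1:ℝ)) * Vᵀ = 1 := by
        rw [Matrix.diagonal_one, mul_one, hV]
      rw [h4, Matrix.one_mulVec] at h3
      simpa using h3
    rw [smul_eq_mul, h2, Finset.mul_sum, ← Finset.sum_sub_distrib, ← Finset.sum_add_distrib]
    refine Finset.sum_nonneg fun j _ => ?_
    have : (p j - c j + μ) * (Vᵀ *ᵥ x) j ^ 2 ≥ 0 := by
      have hpj : p j - c j + μ ≥ 0 := by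
        rw [hp_def]; simp only []
        have := le_max_left (c j - μ) 0
        linarith
      exact mul_nonneg hpj (sq_nonneg _)
    nlinarith [this]
  -- Weyl 1 : specVec hM ≤ specVec (M + R)
  have w1 : ∀ i, specVec hM i ≤ specVec (hM.add hR) i := weyl_mono hM hR hR0
  -- M + R = (A + Cp) + μ • 1
  have hB2 : (A + Cp).IsHermitian := hA.add hCp
  have hMR : M + R = (A + Cp) + μ • (1 : Matrix (Fin n) (Fin n) ℝ) := by
    rw [hR_def]; abel
  have hB3 : ((A + Cp) + μ • (1 : Matrix (Fin n) (Fin n) ℝ)).IsHermitian :=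
    hB2.add (herm_smul_one μ)
  have w1' : ∀ i, specVec hM i ≤ specVec hB2 i + μ := by
    intro i
    have := w1 i
    rw [specVec_congr hMR (hM.add hR) hB3, specVec_shift hB2 μ hB3] at this
    exact this
  -- Weyl 2 : specVec hA ≤ specVec (A + Cp)
  have w2 : ∀ i, specVec hA i ≤ specVec hB2 i := weyl_mono hA hCp hCp0
  -- trace identities
  have tB2 : ∑ i, specVec hB2 i = ∑ i, specVec hA i + ∑ j, p j := by
    rw [← trace_specVec hB2, Matrix.trace_add, trace_specVec hA, hCp_def,
      trace_conj_diag hV]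
  -- sum of p
  set K := univ.filter (fun i : Fin n => (i : ℕ) < k) with hK_def
  have hcK : ∀ i ∈ K, p i = c i - μ := by
    intro i hi
    have hik : (i : ℕ) < k := (Finset.mem_filter.mp hi).2
    have hle : i ≤ kk := by
      have hkkval : (kk : ℕ) = k - 1 := rfl
      rw [Fin.le_def]
      omega
    have : μ ≤ c i := antitone_dsort _ hle
    rw [hp_def]
    exact max_eq_left (by linarith)
  have hcKc : ∀ i ∈ Finset.univ \ K, p i = 0 := by
    intro i hi
    have hik : ¬ ((i : ℕ) < k) := by
      rcases Finset.mem_sdiff.mp hi with ⟨-, h2⟩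
      intro hcon
      exact h2 (Finset.mem_filter.mpr ⟨Finset.mem_univ _, hcon⟩)
    have hle : kk ≤ i := by
      have hkkval : (kk : ℕ) = k - 1 := rfl
      rw [Fin.le_def]
      omega
    have : c i ≤ μ := antitone_dsort _ hle
    rw [hp_def]
    exact max_eq_right (by linarith)
  have hsum_p : ∑ j, p j = ∑ i ∈ K, (c i - μ) := by
    rw [← Finset.sum_sdiff (Finset.filter_subset _ Finset.univ : K ⊆ univ)]
    rw [Finset.sum_congr rfl hcKc, Finset.sum_congr rfl hcK]
    simp
  have hKcard : K.card = k := card_filter_lt hkn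
  -- put it together
  have main : ∑ i ∈ S, (specVec hM i - specVec hA i) ≤ ∑ i ∈ K, c i := by
    have s1 : ∑ i ∈ S, specVec hM i ≤ ∑ i ∈ S, (specVec hB2 i + μ) :=
      Finset.sum_le_sum fun i _ => w1' i
    have s2 : ∑ i ∈ S, (specVec hB2 i + μ) = ∑ i ∈ S, specVec hB2 i + k * μ := by
      rw [Finset.sum_add_distrib, Finset.sum_const, hScard, nsmul_eq_mul]
    have s3 : ∑ i ∈ S, specVec hB2 i ≤ ∑ i ∈ S, specVec hA i + ∑ j, p j := by
      have c1 : ∑ i ∈ S, specVec hB2 i + ∑ i ∈ Finset.univ \ S, specVec hB2 i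
          = ∑ i, specVec hB2 i := by
        rw [add_comm, Finset.sum_sdiff (Finset.subset_univ S)]
      have c2 : ∑ i ∈ S, specVec hA i + ∑ i ∈ Finset.univ \ S, specVec hA i
          = ∑ i, specVec hA i := by
        rw [add_comm, Finset.sum_sdiff (Finset.subset_univ S)]
      have c3 : ∑ i ∈ Finset.univ \ S, specVec hA i ≤ ∑ i ∈ Finset.univ \ S, specVec hB2 i :=
        Finset.sum_le_sum fun i _ => w2 i
      linarith [tB2]
    have s4 : ∑ i ∈ K, (c i - μ) = ∑ i ∈ K, c i - k * μ := by
      rw [Finset.sum_sub_distrib, Finset.sum_const, hKcard, nsmul_eq_mul]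
    have s5 : ∑ i ∈ S, (specVec hM i - specVec hA i)
        = ∑ i ∈ S, specVec hM i - ∑ i ∈ S, specVec hA i := Finset.sum_sub_distrib _ _
    linarith [hsum_p]
  exact main

/-- Lidskii majorization. -/
lemma lidskii {A M : Matrix (Fin n) (Fin n) ℝ} (hA : A.IsHermitian) (hM : M.IsHermitian) :
    Maj (dsort (specVec hM - specVec hA)) (specVec (hM.sub hA)) := by
  have hC : (M - A).IsHermitian := hM.sub hA
  have htr : ∑ i, (specVec hM i - specVec hA i) = ∑ i, specVec (hM.sub hA) i := by
    rw [Finset.sum_sub_distrib, ← trace_specVec hM, ← trace_specVec hA,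
      ← trace_specVec (hM.sub hA), Matrix.trace_sub]
  constructor
  · intro k
    rw [show dsort (dsort (specVec hM - specVec hA)) = dsort (specVec hM - specVec hA) from
      dsort_dsort _, show dsort (specVec (hM.sub hA)) = specVec (hM.sub hA) from
      dsort_specVec _]
    by_cases hk0 : k = 0
    · subst hk0; simp
    by_cases hkn : k ≤ n
    · -- use the subset given by the sorting permutation
      set w : Fin n → ℝ := specVec hM - specVec hA with hw_def
      set σ := Tuple.sort (fun i => -w i) with hσ_def
      set K := univ.filter (fun i : Fin n => (i : ℕ) < k) with hK_def
      have himg : ∑ i ∈ K, dsort w i = ∑ i ∈ K.image ⇑σ, w i := by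
        rw [Finset.sum_image (fun a _ b _ h => σ.injective h)]
        rfl
      have hcard : (K.image ⇑σ).card = k := by
        rw [Finset.card_image_of_injective _ σ.injective, card_filter_lt hkn]
      have := lidskii_subset hA hM (by omega : 1 ≤ k) hkn (K.image ⇑σ) hcard
      rw [himg]
      calc ∑ i ∈ K.image ⇑σ, w i
          = ∑ i ∈ K.image ⇑σ, (specVec hM i - specVec hA i) := rfl
        _ ≤ ∑ i ∈ K, specVec (hM.sub hA) i := this
    · -- k > n : both sums are over univ
      have hKuniv : univ.filter (fun i : Fin n => (i : ℕ) < k) = (univ : Finset (Fin n)) := by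
        apply Finset.filter_true_of_mem
        intro i _
        omega
      rw [hKuniv, sum_dsort]
      calc ∑ i, (specVec hM - specVec hA) i
          = ∑ i, (specVec hM i - specVec hA i) := rfl
        _ = ∑ i, specVec (hM.sub hA) i := htr
        _ ≤ ∑ i, specVec (hM.sub hA) i := le_refl _
  · rw [sum_dsort]
    exact htr

end

theorem stmt17 {n : ℕ} {A B Xbar : Matrix (Fin n) (Fin n) ℝ}
    (hA : A.IsHermitian) (hB : B.IsHermitian) (hXbar : Xbar.IsHermitian)
    (f : (Fin n → ℝ) → ℝ)
    (hsymm : ∀ (σ : Equiv.Perm (Fin n)) (u : Fin n → ℝ), f (u ∘ σ) = f u)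
    (hschur : ∀ u v : Fin n → ℝ, Maj u v → dsort u ≠ dsort v → f u < f v)
    (hspec : specVec hXbar = specVec hB)
    (hmin : ∀ (X : Matrix (Fin n) (Fin n) ℝ) (hX : X.IsHermitian),
      specVec hX = specVec hB →
      f (specVec (hXbar.sub hA)) ≤ f (specVec (hX.sub hA))) :
    specVec (hXbar.sub hA) = dsort (specVec hXbar - specVec hA) := by
  obtain ⟨U, hU, hUd⟩ := sortedSpectral hA
  -- the competitor
  set Xhat : Matrix (Fin n) (Fin n) ℝ := U * Matrix.diagonal (specVec hB) * Uᵀ with hXhat_def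
  have hXhat : Xhat.IsHermitian := herm_conj_diag U (specVec hB)
  have hXhat_diag : Uᵀ * Xhat * U = Matrix.diagonal (specVec hB) := conj_diag_back hU _
  have hXhat_spec : specVec hXhat = specVec hB := by
    rw [specVec_eq_dsort hXhat hU hXhat_diag, dsort_specVec]
  -- spectrum of Xhat - A
  have hsub_diag : Uᵀ * (Xhat - A) * U
      = Matrix.diagonal (specVec hB - specVec hA) := by
    rw [Matrix.mul_sub, Matrix.sub_mul, hXhat_diag, hUd, Matrix.diagonal_sub]
    rfl
  have hsub_spec : specVec (hXhat.sub hA) = dsort (specVec hXbar - specVec hA) := by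
    rw [specVec_eq_dsort (hXhat.sub hA) hU hsub_diag, hspec]
  -- optimality
  have hopt : f (specVec (hXbar.sub hA)) ≤ f (dsort (specVec hXbar - specVec hA)) := by
    have := hmin Xhat hXhat hXhat_spec
    rwa [hsub_spec] at this
  -- Lidskii
  have hmaj : Maj (dsort (specVec hXbar - specVec hA)) (specVec (hXbar.sub hA)) :=
    lidskii hA hXbar
  by_contra hne
  have hne' : dsort (dsort (specVec hXbar - specVec hA)) ≠ dsort (specVec (hXbar.sub hA)) := by
    rw [dsort_dsort, dsort_specVec]
    exact fun h => hne h.symm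
  have := hschur _ _ hmaj hne'
  linarith
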